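/- (Lemma 5.5.) Let d ≥ 1 and 0 < r < 2. If f is an eigenfunction of the integral operator 𝒦_r^d with eigenvalue λ ≠ 0, then f has a continuous representative: there exists a continuous function g : [−1,1]^d → ℝ such that f = g ν_d-almost everywhere. -/

import Mathlib

open MeasureTheory

noncomputable section

/-- The cube `[-1,1]^d` in `ℝ^d`. -/
def cube (d : ℕ) : Set (Fin d → ℝ) := Set.Icc (fun _ => (-1 : ℝ)) (fun _ => 1)

/-- The uniform probability measure `ν_d` on the cube `[-1,1]^d`. -/
def nud (d : ℕ) : Measure (Fin d → ℝ) :=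
  (volume (cube d))⁻¹ • volume.restrict (cube d)

open Classical in
/-- The connectivity kernel `h_r(x,y) = 𝟙{‖x-y‖_∞ ≤ r}` (the norm on `Fin d → ℝ` is the
sup norm). -/
def hkerd {d : ℕ} (r : ℝ) (x y : Fin d → ℝ) : ℝ := if ‖x - y‖ ≤ r then 1 else 0

/-- `H_r^d(x) = ∫ h_r(x,u) dν_d(u) = ∏_i H_r(x_i)`. -/
def Hd (d : ℕ) (r : ℝ) (x : Fin d → ℝ) : ℝ := ∫ u, hkerd r x u ∂(nud d)

/-- The normalized kernel `K_r^d(x,y) = h_r(x,y)/√(H_r^d(x) H_r^d(y))`. -/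
def Kd (d : ℕ) (r : ℝ) (x y : Fin d → ℝ) : ℝ :=
  hkerd r x y / Real.sqrt (Hd d r x * Hd d r y)


lemma volume_cube (d : ℕ) : volume (cube d) = ENNReal.ofReal 2 ^ d := by
  rw [cube, Real.volume_Icc_pi]
  norm_num

lemma volume_cube_ne_zero (d : ℕ) : volume (cube d) ≠ 0 := by
  rw [volume_cube]; positivity

lemma volume_cube_ne_top (d : ℕ) : volume (cube d) ≠ ⊤ := by
  rw [volume_cube]
  exact ENNReal.pow_ne_top ENNReal.ofReal_ne_top

instance nud_prob (d : ℕ) : IsProbabilityMeasure (nud d) := by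
  constructor
  rw [nud, Measure.smul_apply, Measure.restrict_apply MeasurableSet.univ, Set.univ_inter,
    smul_eq_mul]
  exact ENNReal.inv_mul_cancel (volume_cube_ne_zero d) (volume_cube_ne_top d)

lemma nud_apply (d : ℕ) (s : Set (Fin d → ℝ)) :
    nud d s = (volume (cube d))⁻¹ * volume (s ∩ cube d) := by
  rw [nud, Measure.smul_apply, smul_eq_mul, Measure.restrict_apply' ]
  exact measurableSet_Icc

lemma nud_ac (d : ℕ) : nud d ≪ (volume : Measure (Fin d → ℝ)) := by
  intro s hs
  rw [nud_apply]
  rw [measure_mono_null Set.inter_subset_left hs, mul_zero]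

lemma nud_ae_mem_cube (d : ℕ) : ∀ᵐ y ∂(nud d), y ∈ cube d := by
  rw [ae_iff, nud_apply]
  have : {y | ¬ y ∈ cube d} ∩ cube d = ∅ := by ext y; simp
  rw [this, measure_empty, mul_zero]

lemma hkerd_nonneg {d : ℕ} (r : ℝ) (x y : Fin d → ℝ) : 0 ≤ hkerd r x y := by
  unfold hkerd; split <;> norm_num

lemma norm_abs_hkerd {d : ℕ} (r : ℝ) (x y : Fin d → ℝ) : ‖hkerd r x y‖ ≤ 1 := by
  unfold hkerd; split <;> simp

lemma ball_eq_Icc {d : ℕ} {r : ℝ} (hr : 0 ≤ r) (x : Fin d → ℝ) :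
    {y : Fin d → ℝ | ‖x - y‖ ≤ r} = Set.Icc (fun i => x i - r) (fun i => x i + r) := by
  ext y
  simp only [Set.mem_setOf_eq, Set.mem_Icc, pi_norm_le_iff_of_nonneg hr, Pi.sub_apply,
    Real.norm_eq_abs, abs_sub_le_iff, Pi.le_def]
  constructor
  · intro h
    exact ⟨fun i => by linarith [(h i).1], fun i => by linarith [(h i).2]⟩
  · intro ⟨h1, h2⟩ i
    exact ⟨by linarith [h1 i], by linarith [h2 i]⟩

lemma hkerd_eq_indicator {d : ℕ} (r : ℝ) (x : Fin d → ℝ) :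
    (fun y => hkerd r x y) = Set.indicator {y : Fin d → ℝ | ‖x - y‖ ≤ r} (fun _ => (1:ℝ)) := by
  ext y
  rw [Set.indicator_apply, hkerd]
  rfl

lemma measurableSet_ball' {d : ℕ} (r : ℝ) (x : Fin d → ℝ) :
    MeasurableSet {y : Fin d → ℝ | ‖x - y‖ ≤ r} :=
  (isClosed_le (by fun_prop) continuous_const).measurableSet

lemma Hd_eq_measure (d : ℕ) (r : ℝ) (x : Fin d → ℝ) :
    Hd d r x = (nud d {y | ‖x - y‖ ≤ r}).toReal := by
  rw [Hd]
  rw [show (fun u => hkerd r x u) = Set.indicator {y : Fin d → ℝ | ‖x - y‖ ≤ r} 1 from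
    hkerd_eq_indicator r x]
  exact integral_indicator_one (measurableSet_ball' r x)

lemma Hd_nonneg (d : ℕ) (r : ℝ) (x : Fin d → ℝ) : 0 ≤ Hd d r x := by
  rw [Hd_eq_measure]; exact ENNReal.toReal_nonneg

lemma Hd_pos (d : ℕ) {r : ℝ} (hr0 : 0 < r) {x : Fin d → ℝ} (hx : x ∈ cube d) :
    0 < Hd d r x := by
  rw [Hd_eq_measure]
  refine ENNReal.toReal_pos ?_ (measure_ne_top _ _)
  rw [nud_apply, cube, ball_eq_Icc hr0.le, Set.Icc_inter_Icc]
  refine mul_ne_zero (ENNReal.inv_ne_zero.2 (volume_cube_ne_top d)) ?_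
  rw [Real.volume_Icc_pi]
  refine Finset.prod_ne_zero_iff.2 fun i _ => ?_
  have hx1 : -1 ≤ x i := hx.1 i
  have hx2 : x i ≤ 1 := hx.2 i
  simp only [Pi.sup_apply, Pi.inf_apply]
  have : max (x i - r) (-1) < min (x i + r) 1 := by
    rw [max_lt_iff, lt_min_iff, lt_min_iff]
    constructor <;> constructor <;> linarith
  exact (ENNReal.ofReal_pos.2 (by linarith)).ne'

lemma sphere_null (d : ℕ) {r : ℝ} (hr0 : 0 < r) (x : Fin d → ℝ) :
    nud d {y : Fin d → ℝ | ‖x - y‖ = r} = 0 := by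
  apply nud_ac d
  refine measure_mono_null (t := ⋃ i : Fin d, ({y : Fin d → ℝ | y i = x i - r} ∪
    {y : Fin d → ℝ | y i = x i + r})) ?_ ?_
  · intro y hy
    simp only [Set.mem_setOf_eq] at hy
    by_contra hc
    simp only [Set.mem_iUnion, Set.mem_union, Set.mem_setOf_eq, not_exists, not_or] at hc
    have : ∀ i, ‖(x - y) i‖ < r := by
      intro i
      have h1 := (hc i).1
      have h2 := (hc i).2
      have hle : |x i - y i| ≤ r := by
        have := pi_norm_le_iff_of_nonneg (le_of_lt hr0) |>.1 hy.le i
        simpa [Real.norm_eq_abs] using this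
      rcases lt_or_eq_of_le hle with h | h
      · simpa [Real.norm_eq_abs] using h
      · rcases abs_eq hr0.le |>.1 h with h' | h'
        · exact absurd (by linarith) h1
        · exact absurd (by linarith) h2
    have := (pi_norm_lt_iff hr0 (x := x - y)).2 this
    rw [hy] at this
    exact lt_irrefl r this
  · apply measure_iUnion_null
    intro i
    apply measure_union_null <;>
    · rw [MeasureTheory.volume_pi]
      exact Measure.pi_hyperplane _ i _

lemma continuous_integral_hkerd (d : ℕ) {r : ℝ} (hr0 : 0 < r) (φ : (Fin d → ℝ) → ℝ)
    (hφ : Integrable φ (nud d)) :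
    Continuous (fun x => ∫ y, hkerd r x y * φ y ∂(nud d)) := by
  rw [continuous_iff_continuousAt]
  intro x₀
  apply continuousAt_of_dominated (bound := fun y => ‖φ y‖)
  · filter_upwards with x
    refine AEStronglyMeasurable.mul ?_ hφ.1
    have : hkerd r x = fun y => hkerd r x y := rfl
    rw [this, hkerd_eq_indicator]
    exact (measurable_const.indicator (measurableSet_ball' r x)).aestronglyMeasurable
  · filter_upwards with x
    filter_upwards with y
    rw [norm_mul]
    calc ‖hkerd r x y‖ * ‖φ y‖ ≤ 1 * ‖φ y‖ := by
          exact mul_le_mul_of_nonneg_right (norm_abs_hkerd r x y) (norm_nonneg _)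
      _ = ‖φ y‖ := one_mul _
  · exact hφ.norm
  · have hns : ∀ᵐ y ∂(nud d), ‖x₀ - y‖ ≠ r := by
      rw [ae_iff]
      simpa using sphere_null d hr0 x₀
    filter_upwards [hns] with y hy
    rcases lt_or_gt_of_ne hy with hlt | hgt
    · have hev : ∀ᶠ x in nhds x₀, hkerd r x y * φ y = 1 * φ y := by
        have : IsOpen {x : Fin d → ℝ | ‖x - y‖ < r} :=
          isOpen_lt (by fun_prop) continuous_const
        filter_upwards [this.mem_nhds hlt] with x hx
        rw [hkerd, if_pos (le_of_lt hx)]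
      exact (continuousAt_congr hev).2 continuousAt_const
    · have hev : ∀ᶠ x in nhds x₀, hkerd r x y * φ y = 0 * φ y := by
        have : IsOpen {x : Fin d → ℝ | r < ‖x - y‖} :=
          isOpen_lt continuous_const (by fun_prop)
        filter_upwards [this.mem_nhds hgt] with x hx
        rw [hkerd, if_neg (not_le.2 hx)]
      exact (continuousAt_congr hev).2 continuousAt_const

lemma continuous_Hd (d : ℕ) {r : ℝ} (hr0 : 0 < r) : Continuous (Hd d r) := by
  have := continuous_integral_hkerd d hr0 (fun _ => (1:ℝ)) (integrable_const 1)
  simp only [mul_one] at this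
  exact this

lemma Hd_lower_bound (d : ℕ) {r : ℝ} (hr0 : 0 < r) :
    ∃ c > 0, ∀ x ∈ cube d, c ≤ Hd d r x := by
  obtain ⟨x₀, hx₀, hmin⟩ := (isCompact_Icc (a := fun _ : Fin d => (-1:ℝ)) (b := fun _ => 1)).exists_isMinOn
    ⟨fun _ => 0, by constructor <;> intro i <;> norm_num⟩ (continuous_Hd d hr0).continuousOn
  exact ⟨Hd d r x₀, Hd_pos d hr0 hx₀, fun x hx => hmin hx⟩

/-- `f` is an eigenfunction with eigenvalue `lam` of the integral operator on
`L²([-1,1]^d, ν_d)` with kernel `K`: `f ∈ L²`, `f ≠ 0` in `L²`, and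
`∫ K(x,y) f(y) dν_d(y) = lam f(x)` for `ν_d`-a.e. `x`. -/
def IsEigenfunD (d : ℕ) (K : (Fin d → ℝ) → (Fin d → ℝ) → ℝ) (lam : ℝ)
    (f : (Fin d → ℝ) → ℝ) : Prop :=
  MemLp f 2 (nud d) ∧ ¬ (f =ᵐ[nud d] (0 : (Fin d → ℝ) → ℝ)) ∧
    ∀ᵐ x ∂(nud d), ∫ y, K x y * f y ∂(nud d) = lam * f x

/-- Lemma 5.5: every eigenfunction of `𝒦_r^d` with nonzero eigenvalue has a continuous
representative on the cube `[-1,1]^d`. -/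
theorem eigenfunction_continuous_representative
    (d : ℕ) (hd : 0 < d) (r : ℝ) (hr0 : 0 < r) (hr2 : r < 2)
    (lam : ℝ) (hlam : lam ≠ 0) (f : (Fin d → ℝ) → ℝ)
    (hf : IsEigenfunD d (Kd d r) lam f) :
    ∃ g : (Fin d → ℝ) → ℝ, ContinuousOn g (cube d) ∧ f =ᵐ[nud d] g := by
  obtain ⟨hmem, hne, heig⟩ := hf
  obtain ⟨c, hc, hcle⟩ := Hd_lower_bound d hr0
  have hfInt : Integrable f (nud d) := hmem.integrable (by norm_num)
  set φ : (Fin d → ℝ) → ℝ := fun y => f y * (Real.sqrt (Hd d r y))⁻¹ with hφdef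
  have hφmeas : AEStronglyMeasurable φ (nud d) :=
    hmem.aestronglyMeasurable.mul
      (((Real.continuous_sqrt.comp (continuous_Hd d hr0)).measurable.inv).aestronglyMeasurable)
  have hφInt : Integrable φ (nud d) := by
    refine Integrable.mono' (hfInt.norm.const_mul (Real.sqrt c)⁻¹) hφmeas ?_
    filter_upwards [nud_ae_mem_cube d] with y hy
    have h1 : Real.sqrt c ≤ Real.sqrt (Hd d r y) := Real.sqrt_le_sqrt (hcle y hy)
    have h2 : 0 < Real.sqrt c := Real.sqrt_pos.2 hc
    rw [hφdef, norm_mul, Real.norm_eq_abs (Real.sqrt _)⁻¹, abs_of_nonneg (by positivity)]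
    calc ‖f y‖ * (Real.sqrt (Hd d r y))⁻¹ ≤ ‖f y‖ * (Real.sqrt c)⁻¹ :=
          mul_le_mul_of_nonneg_left (inv_anti₀ h2 h1) (norm_nonneg _)
      _ = (Real.sqrt c)⁻¹ * ‖f y‖ := mul_comm _ _
  have hkey : ∀ x, ∫ y, Kd d r x y * f y ∂(nud d)
      = (Real.sqrt (Hd d r x))⁻¹ * ∫ y, hkerd r x y * φ y ∂(nud d) := by
    intro x
    rw [← MeasureTheory.integral_const_mul]
    refine integral_congr_ae (Filter.Eventually.of_forall fun y => ?_)
    show hkerd r x y / Real.sqrt (Hd d r x * Hd d r y) * f y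
      = (Real.sqrt (Hd d r x))⁻¹ * (hkerd r x y * (f y * (Real.sqrt (Hd d r y))⁻¹))
    rw [Real.sqrt_mul (Hd_nonneg d r x), div_eq_mul_inv, mul_inv]
    ring
  refine ⟨fun x => lam⁻¹ * ((Real.sqrt (Hd d r x))⁻¹ * ∫ y, hkerd r x y * φ y ∂(nud d)), ?_, ?_⟩
  · apply ContinuousOn.mul continuousOn_const
    apply ContinuousOn.mul
    · apply ContinuousOn.inv₀ ((Real.continuous_sqrt.comp (continuous_Hd d hr0)).continuousOn)
      intro x hx
      exact ne_of_gt (Real.sqrt_pos.2 (Hd_pos d hr0 hx))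
    · exact (continuous_integral_hkerd d hr0 φ hφInt).continuousOn
  · filter_upwards [heig] with x hx
    rw [← hkey, hx, ← mul_assoc, inv_mul_cancel₀ hlam, one_mul]
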